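/- arXiv:0809.4937 — 2 statements merged into one kernel-verified Lean document; each statement's English description precedes it below -/
import Mathlib

section
/- Asymptotic variance formula for a degenerate kernel: if h_g(V₁,V₂) = K_g(X₁−X₂)π(V₁)π(V₂) with V₁, V₂ i.i.d., π(V) = a(ε)m²(X)w(X), E[a(ε)|X] = 0, and K_g(u) = g⁻¹K(u/g), then g·E[h_g(V₁,V₂)²] → E[b²(X)m⁸(X)f(X)w⁴(X)]·∫K²(u)du as g → 0, where b(x) = E[a(ε)²|X=x] under continuity and integrability assumptions. -/
open MeasureTheory Filter

/-- Auxiliary: continuity of the autocorrelation `t ↦ ∫ φ x * φ (x - t)`. -/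
lemma autocorr_continuous (φ : ℝ → ℝ) (hφc : Continuous φ) (hφs : HasCompactSupport φ)
    (hφi : Integrable φ) :
    Continuous (fun t => ∫ x : ℝ, φ x * φ (x - t)) := by
  have h1 : HasCompactSupport (φ ∘ (Homeomorph.neg ℝ)) := hφs.comp_homeomorph _
  have := h1.continuous_convolution_right (ContinuousLinearMap.mul ℝ ℝ)
    hφi.locallyIntegrable (hφc.comp continuous_neg)
  convert this using 2 with t
  rw [MeasureTheory.convolution]
  congr 1 with x
  simp [sub_sub_cancel_left]

/-- Auxiliary: change of variables for the inner integral. -/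
lemma inner_cov (h : ℝ → ℝ) (x : ℝ) : ∫ y : ℝ, h (x - y) = ∫ y : ℝ, h y := by
  calc ∫ y : ℝ, h (x - y) = ∫ y : ℝ, (fun z => h (x + z)) (-y) := by
        simp [sub_eq_add_neg]
    _ = ∫ z : ℝ, h (x + z) := by
        simpa using integral_neg_eq_self (fun z => h (x + z)) volume
    _ = ∫ y : ℝ, h y := integral_add_left_eq_self _ _

/-- Asymptotic variance formula for a degenerate kernel. With `X₁, X₂` i.i.d. with
density `f`, `b(x) = E[a(ε)²|X=x]`, the limit
`g·E[K_g(X₁−X₂)² b(X₁)m⁴(X₁)w²(X₁) b(X₂)m⁴(X₂)w²(X₂)] → (∫K²)·E[b²(X)m⁸(X)f(X)w⁴(X)]`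
as `g → 0⁺`, written as an integral against the density `f`. -/
theorem degenerate_kernel_variance_limit
    (K f b m w : ℝ → ℝ)
    (hf : Continuous f) (hfb : ∃ C, ∀ x, |f x| ≤ C) (hf0 : ∀ x, 0 ≤ f x)
    (hb : Continuous b) (hbb : ∃ C, ∀ x, |b x| ≤ C)
    (hm : Continuous m) (hw : Continuous w) (hws : HasCompactSupport w)
    (hK : Measurable K) (hKb : ∃ C, ∀ x, |K x| ≤ C) (hKs : HasCompactSupport K) :
    Tendsto (fun g : ℝ => g * ∫ x : ℝ, ∫ y : ℝ,
        ((1 / g) * K ((x - y) / g))^2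
          * (b x * (m x)^4 * (w x)^2 * f x) * (b y * (m y)^4 * (w y)^2 * f y))
      (nhdsWithin 0 (Set.Ioi 0))
      (nhds ((∫ u : ℝ, (K u)^2) * ∫ x : ℝ, (b x)^2 * (m x)^8 * (w x)^4 * (f x)^2)) := by
  obtain ⟨CK, hCK⟩ := hKb
  set φ : ℝ → ℝ := fun x => b x * (m x)^4 * (w x)^2 * f x with hφdef
  have hφc : Continuous φ := ((hb.mul (hm.pow 4)).mul (hw.pow 2)).mul hf
  have hφs : HasCompactSupport φ := by
    have h1 : HasCompactSupport (w ^ 2 : ℝ → ℝ) := by rw [sq]; exact hws.mul_right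
    exact ((h1.mul_left (f := b * m ^ 4)).mul_right : HasCompactSupport (b * m ^ 4 * w ^ 2 * f))
  have hφi : Integrable φ := hφc.integrable_of_hasCompactSupport hφs
  obtain ⟨Cφ, hCφ⟩ : ∃ C, ∀ x, |φ x| ≤ C := by
    obtain ⟨C, hC⟩ := hφc.bounded_above_of_compact_support hφs
    exact ⟨C, fun x => by simpa [Real.norm_eq_abs] using hC x⟩
  have hCφ0 : 0 ≤ Cφ := le_trans (abs_nonneg _) (hCφ 0)
  -- K² is integrable
  have hK2m : Measurable fun u => (K u)^2 := hK.pow_const 2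
  have hIK : Integrable (fun u => (K u)^2) := by
    have hts : MeasurableSet (tsupport K) := (isClosed_tsupport K).measurableSet
    have hind : Integrable ((tsupport K).indicator (fun _ => CK^2)) := by
      rw [integrable_indicator_iff hts]
      exact integrableOn_const hKs.measure_lt_top.ne
    refine Integrable.mono' hind hK2m.aestronglyMeasurable (Filter.Eventually.of_forall fun u => ?_)
    by_cases hu : u ∈ tsupport K
    · simp only [Set.indicator_of_mem hu, Real.norm_eq_abs, abs_of_nonneg (sq_nonneg (K u))]
      calc (K u)^2 = |K u|^2 := (sq_abs _).symm
        _ ≤ CK^2 := pow_le_pow_left₀ (abs_nonneg _) (hCK u) 2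
    · simp [image_eq_zero_of_notMem_tsupport hu, Set.indicator_of_notMem hu, sq_nonneg]
  -- the autocorrelation function
  set ψ : ℝ → ℝ := fun t => ∫ x : ℝ, φ x * φ (x - t) with hψdef
  have hψc : Continuous ψ := autocorr_continuous φ hφc hφs hφi
  set D : ℝ := Cφ * ∫ x : ℝ, |φ x| with hDdef
  have hψb : ∀ t, |ψ t| ≤ D := by
    intro t
    have hint : Integrable (fun x => φ (x - t) * φ x) :=
      hφi.bdd_mul (hφc.comp (continuous_id.sub continuous_const)).aestronglyMeasurable
        (c := Cφ) (Filter.Eventually.of_forall fun x => by simpa [Real.norm_eq_abs] using hCφ (x - t))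
    have hint' : Integrable (fun x => φ x * φ (x - t)) := by
      simpa [mul_comm] using hint
    calc |ψ t| ≤ ∫ x : ℝ, |φ x * φ (x - t)| := by
          simpa only [Real.norm_eq_abs] using
            norm_integral_le_integral_norm (μ := volume) (fun x => φ x * φ (x - t))
      _ ≤ ∫ x : ℝ, Cφ * |φ x| := by
          refine integral_mono hint'.abs (hφi.abs.const_mul Cφ) fun x => ?_
          rw [abs_mul, mul_comm]
          exact mul_le_mul_of_nonneg_right (hCφ (x - t)) (abs_nonneg _)
      _ = D := integral_const_mul Cφ _
  have hD0 : 0 ≤ D := le_trans (abs_nonneg _) (hψb 0)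
  -- product integrability, for Fubini
  have hFint : ∀ g : ℝ, Integrable (fun p : ℝ × ℝ =>
      (K p.2)^2 * φ p.1 * φ (p.1 - g * p.2)) (volume.prod volume) := by
    intro g
    have h1 : Integrable (fun p : ℝ × ℝ => φ p.1 * (K p.2)^2) (volume.prod volume) :=
      hφi.mul_prod hIK
    have h2 : Integrable (fun p : ℝ × ℝ =>
        φ (p.1 - g * p.2) * (φ p.1 * (K p.2)^2)) (volume.prod volume) := by
      refine h1.bdd_mul (c := Cφ) ?_ (Filter.Eventually.of_forall fun p => by simpa [Real.norm_eq_abs] using hCφ (p.1 - g * p.2))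
      exact (hφc.comp (continuous_fst.sub (continuous_const.mul continuous_snd))).aestronglyMeasurable
    refine h2.congr (Filter.Eventually.of_forall fun p => ?_)
    ring
  -- the key identity, for every g > 0
  have hkey : ∀ g : ℝ, 0 < g →
      (g * ∫ x : ℝ, ∫ y : ℝ, ((1 / g) * K ((x - y) / g))^2
          * (b x * (m x)^4 * (w x)^2 * f x) * (b y * (m y)^4 * (w y)^2 * f y))
        = ∫ u : ℝ, (K u)^2 * ψ (g * u) := by
    intro g hg
    have hg' : g ≠ 0 := ne_of_gt hg
    have hinner : ∀ x : ℝ, (∫ y : ℝ, ((1 / g) * K ((x - y) / g))^2 * φ x * φ y)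
        = g * (1 / g)^2 * ∫ u : ℝ, (K u)^2 * φ x * φ (x - g * u) := by
      intro x
      set h : ℝ → ℝ := fun z => ((1 / g) * K (z / g))^2 * φ x * φ (x - z) with hhdef
      have e1 : (∫ y : ℝ, ((1 / g) * K ((x - y) / g))^2 * φ x * φ y) = ∫ y : ℝ, h (x - y) := by
        congr 1 with y
        simp [hhdef, sub_sub_cancel]
      have e2 : (∫ z : ℝ, h z) = |g| • ∫ u : ℝ, h (g * u) := by
        rw [Measure.integral_comp_mul_left h g, smul_smul, abs_inv,
          mul_inv_cancel₀ (by simpa using hg'), one_smul]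
      have e3 : (∫ u : ℝ, h (g * u)) = (1 / g)^2 * ∫ u : ℝ, (K u)^2 * φ x * φ (x - g * u) := by
        rw [← integral_const_mul]
        congr 1 with u
        show (1 / g * K (g * u / g)) ^ 2 * φ x * φ (x - g * u) = _
        rw [mul_div_cancel_left₀ u hg']
        ring
      rw [e1, inner_cov h x, e2, e3, abs_of_pos hg, smul_eq_mul]
      ring
    calc (g * ∫ x : ℝ, ∫ y : ℝ, ((1 / g) * K ((x - y) / g))^2
          * (b x * (m x)^4 * (w x)^2 * f x) * (b y * (m y)^4 * (w y)^2 * f y))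
        = g * ∫ x : ℝ, g * (1 / g)^2 * ∫ u : ℝ, (K u)^2 * φ x * φ (x - g * u) := by
          congr 1
          exact integral_congr_ae (Filter.Eventually.of_forall fun x => hinner x)
      _ = (g * (g * (1 / g)^2)) * ∫ x : ℝ, ∫ u : ℝ, (K u)^2 * φ x * φ (x - g * u) := by
          rw [integral_const_mul]
          ring
      _ = ∫ x : ℝ, ∫ u : ℝ, (K u)^2 * φ x * φ (x - g * u) := by
          have : g * (g * (1 / g)^2) = 1 := by field_simp
          rw [this, one_mul]
      _ = ∫ u : ℝ, ∫ x : ℝ, (K u)^2 * φ x * φ (x - g * u) :=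
          integral_integral_swap (hFint g)
      _ = ∫ u : ℝ, (K u)^2 * ψ (g * u) := by
          congr 1 with u
          rw [hψdef, ← integral_const_mul]
          congr 1 with x
          ring
  -- limit of the right-hand side by dominated convergence
  have hlim : Tendsto (fun g : ℝ => ∫ u : ℝ, (K u)^2 * ψ (g * u))
      (nhdsWithin 0 (Set.Ioi 0)) (nhds (∫ u : ℝ, (K u)^2 * ψ 0)) := by
    refine tendsto_integral_filter_of_dominated_convergence (fun u => (K u)^2 * D)
      (Filter.Eventually.of_forall fun g => ?_)
      (Filter.Eventually.of_forall fun g => Filter.Eventually.of_forall fun u => ?_)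
      (hIK.mul_const D)
      (Filter.Eventually.of_forall fun u => ?_)
    · exact (hK2m.mul (hψc.measurable.comp (measurable_id.const_mul g))).aestronglyMeasurable
    · rw [Real.norm_eq_abs, abs_mul, abs_of_nonneg (sq_nonneg (K u))]
      exact mul_le_mul_of_nonneg_left (hψb (g * u)) (sq_nonneg _)
    · have h1 : Tendsto (fun g : ℝ => g * u) (nhdsWithin 0 (Set.Ioi 0)) (nhds 0) := by
        have h0 : Tendsto (fun g : ℝ => g) (nhdsWithin (0:ℝ) (Set.Ioi 0)) (nhds 0) :=
          tendsto_id.mono_left nhdsWithin_le_nhds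
        simpa using h0.mul_const u
      exact ((hψc.continuousAt.tendsto.comp h1).const_mul _)
  -- put everything together
  have heq : (fun g : ℝ => g * ∫ x : ℝ, ∫ y : ℝ, ((1 / g) * K ((x - y) / g))^2
          * (b x * (m x)^4 * (w x)^2 * f x) * (b y * (m y)^4 * (w y)^2 * f y))
      =ᶠ[nhdsWithin 0 (Set.Ioi 0)] (fun g : ℝ => ∫ u : ℝ, (K u)^2 * ψ (g * u)) :=
    Filter.eventuallyEq_of_mem self_mem_nhdsWithin fun g hg => hkey g hg
  have hval : (∫ u : ℝ, (K u)^2 * ψ 0)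
      = (∫ u : ℝ, (K u)^2) * ∫ x : ℝ, (b x)^2 * (m x)^8 * (w x)^4 * (f x)^2 := by
    rw [integral_mul_const]
    congr 1
    show (∫ x : ℝ, φ x * φ (x - 0)) = _
    refine integral_congr_ae (Filter.Eventually.of_forall fun x => ?_)
    simp only [sub_zero, hφdef]
    ring
  rw [← hval]
  exact hlim.congr' heq.symm
end

section
/- Triple kernel convolution limit: for continuous compactly supported φ and kernels K (bounded, compactly supported, ∫K=1), h·∫∫∫ K_g(x−y) K_h(z−x) K_h(z−y) φ(x,y,z) dx dy dz → (∫K²(u)du)·∫ φ(x,x,x) dx as h → 0 and g/h → 0, where K_h(u) = h⁻¹K(u/h). -/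
open MeasureTheory Filter

lemma aux_sub_div_right (G : ℝ → ℝ) (x c : ℝ) :
    (∫ z : ℝ, G ((z - x) / c)) = |c| * ∫ z : ℝ, G z := by
  rw [show (∫ z : ℝ, G ((z - x) / c)) = ∫ z : ℝ, (fun t => G (t / c)) (z - x) from rfl,
    integral_sub_right_eq_self (fun t => G (t / c)) x, Measure.integral_comp_div]
  simp [smul_eq_mul]

lemma aux_sub_div_left (G : ℝ → ℝ) (x c : ℝ) :
    (∫ y : ℝ, G ((x - y) / c)) = |c| * ∫ z : ℝ, G z := by
  rw [show (∫ y : ℝ, G ((x - y) / c)) = ∫ y : ℝ, (fun t => G (t / c)) (x - y) from rfl,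
    integral_sub_left_eq_self (fun t => G (t / c)) _ x, Measure.integral_comp_div]
  simp [smul_eq_mul]

lemma key_eq (K : ℝ → ℝ) (φ : ℝ × ℝ × ℝ → ℝ) (a b : ℝ) (ha : 0 < a) (hb : 0 < b) :
    (b * ∫ x : ℝ, ∫ y : ℝ, ∫ z : ℝ,
        ((1 / a) * K ((x - y) / a)) * ((1 / b) * K ((z - x) / b))
          * ((1 / b) * K ((z - y) / b)) * φ (x, y, z))
    = ∫ x : ℝ, ∫ u : ℝ, ∫ w : ℝ,
        K u * K w * K (w + a / b * u) * φ (x, x - a * u, x + b * w) := by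
  rw [← integral_const_mul]
  congr 1
  funext x
  -- innermost substitution in z
  have hz : ∀ y : ℝ,
      (∫ z : ℝ, ((1 / a) * K ((x - y) / a)) * ((1 / b) * K ((z - x) / b))
          * ((1 / b) * K ((z - y) / b)) * φ (x, y, z))
      = (1 / (a * b)) * (K ((x - y) / a) *
          ∫ t : ℝ, K t * K (t + (x - y) / b) * φ (x, y, x + b * t)) := by
    intro y
    have e : (∫ z : ℝ, ((1 / a) * K ((x - y) / a)) * ((1 / b) * K ((z - x) / b))
          * ((1 / b) * K ((z - y) / b)) * φ (x, y, z))
        = ∫ z : ℝ, (fun t : ℝ => ((1 / a) * K ((x - y) / a)) * ((1 / b) * K t)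
          * ((1 / b) * K (t + (x - y) / b)) * φ (x, y, x + b * t)) ((z - x) / b) := by
      congr 1
      funext z
      have e1 : (z - x) / b + (x - y) / b = (z - y) / b := by ring
      have e2 : x + b * ((z - x) / b) = z := by field_simp; ring
      simp only [e1, e2]
    rw [e, aux_sub_div_right (fun t : ℝ => ((1 / a) * K ((x - y) / a)) * ((1 / b) * K t)
          * ((1 / b) * K (t + (x - y) / b)) * φ (x, y, x + b * t)) x b, abs_of_pos hb]
    simp only [← integral_const_mul]
    congr 1
    funext t
    field_simp
  simp_rw [hz]
  -- substitution in y
  have ey : (∫ y : ℝ, (1 / (a * b)) * (K ((x - y) / a) *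
        ∫ t : ℝ, K t * K (t + (x - y) / b) * φ (x, y, x + b * t)))
      = ∫ y : ℝ, (fun u : ℝ => (1 / (a * b)) * (K u *
        ∫ t : ℝ, K t * K (t + a / b * u) * φ (x, x - a * u, x + b * t))) ((x - y) / a) := by
    congr 1
    funext y
    have e1 : a / b * ((x - y) / a) = (x - y) / b := by field_simp
    have e2 : x - a * ((x - y) / a) = y := by field_simp; ring
    simp only [e1, e2]
  rw [ey, aux_sub_div_left (fun u : ℝ => (1 / (a * b)) * (K u *
        ∫ t : ℝ, K t * K (t + a / b * u) * φ (x, x - a * u, x + b * t))) x a, abs_of_pos ha]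
  have pull : ∀ u : ℝ, (∫ w : ℝ, K u * K w * K (w + a / b * u) * φ (x, x - a * u, x + b * w))
      = K u * ∫ w : ℝ, K w * K (w + a / b * u) * φ (x, x - a * u, x + b * w) := by
    intro u
    rw [← integral_const_mul]
    congr 1
    funext w
    ring
  simp_rw [pull]
  simp only [← integral_const_mul]
  congr 1
  funext u
  congr 1
  funext w
  field_simp

/-- Triple kernel convolution limit:
`h·∫∫∫ K_g(x−y) K_h(z−x) K_h(z−y) φ(x,y,z) dx dy dz → (∫K²)·∫ φ(x,x,x) dx`
as `h → 0` and `g/h → 0`, where `K_h(u) = h⁻¹K(u/h)`. -/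
theorem triple_kernel_convolution_limit
    (K : ℝ → ℝ) (φ : ℝ × ℝ × ℝ → ℝ) (L : NNReal)
    (hK : LipschitzWith L K) (hKs : HasCompactSupport K) (hK1 : ∫ u : ℝ, K u = 1)
    (hφ : Continuous φ) (hφs : HasCompactSupport φ)
    (g h : ℕ → ℝ) (hgpos : ∀ n, 0 < g n) (hhpos : ∀ n, 0 < h n)
    (hh0 : Tendsto h atTop (nhds 0))
    (hgh : Tendsto (fun n => g n / h n) atTop (nhds 0)) :
    Tendsto (fun n => h n * ∫ x : ℝ, ∫ y : ℝ, ∫ z : ℝ,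
        ((1 / g n) * K ((x - y) / g n)) * ((1 / h n) * K ((z - x) / h n))
          * ((1 / h n) * K ((z - y) / h n)) * φ (x, y, z))
      atTop (nhds ((∫ u : ℝ, (K u)^2) * ∫ x : ℝ, φ (x, x, x))) := by
  have hKc : Continuous K := hK.continuous
  -- bounds
  obtain ⟨MK, hMK⟩ := hKc.bounded_above_of_compact_support hKs
  obtain ⟨Mφ, hMφ⟩ := hφ.bounded_above_of_compact_support hφs
  have hMK0 : 0 ≤ MK := le_trans (norm_nonneg _) (hMK 0)
  have hMφ0 : 0 ≤ Mφ := le_trans (norm_nonneg _) (hMφ (0,0,0))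
  -- the projection of the support of φ
  set S : Set ℝ := Prod.fst '' tsupport φ with hS
  have hScomp : IsCompact S := hφs.image continuous_fst
  have hSmeas : MeasurableSet S := hScomp.isClosed.measurableSet
  have hmemS : ∀ x y z : ℝ, φ (x, y, z) ≠ 0 → x ∈ S := by
    intro x y z hxyz
    exact ⟨(x, y, z), subset_tsupport φ hxyz, rfl⟩
  -- integrability pieces
  have hKint : Integrable K := hKc.integrable_of_hasCompactSupport hKs
  have hKabs : Integrable (fun u : ℝ => |K u|) := hKint.abs
  have hKK : Integrable (fun q : ℝ × ℝ => |K q.1| * |K q.2|)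
      ((volume : Measure ℝ).prod volume) := hKabs.mul_prod hKabs
  have hind : Integrable (S.indicator fun _ : ℝ => MK * Mφ) := by
    rw [integrable_indicator_iff hSmeas]
    exact integrableOn_const hScomp.measure_lt_top.ne
  set μ3 : Measure (ℝ × ℝ × ℝ) := (volume : Measure ℝ).prod ((volume : Measure ℝ).prod volume)
    with hμ3
  set D : ℝ × ℝ × ℝ → ℝ :=
    fun p => S.indicator (fun _ : ℝ => MK * Mφ) p.1 * (|K p.2.1| * |K p.2.2|) with hD
  have hDint : Integrable D μ3 := hind.mul_prod hKK
  -- the transformed integrand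
  set Φ : ℕ → ℝ × ℝ × ℝ → ℝ := fun n p =>
    K p.2.1 * K p.2.2 * K (p.2.2 + g n / h n * p.2.1)
      * φ (p.1, p.1 - g n * p.2.1, p.1 + h n * p.2.2) with hΦ
  have hΦcont : ∀ n, Continuous (Φ n) := by
    intro n
    fun_prop
  -- bound on Φ
  have hbound : ∀ n p, ‖Φ n p‖ ≤ D p := by
    intro n p
    by_cases hp : φ (p.1, p.1 - g n * p.2.1, p.1 + h n * p.2.2) = 0
    · simp only [hΦ, hp, mul_zero, norm_zero, hD]
      exact mul_nonneg (Set.indicator_nonneg (fun _ _ => mul_nonneg hMK0 hMφ0) _)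
        (mul_nonneg (abs_nonneg _) (abs_nonneg _))
    · have hx : p.1 ∈ S := hmemS _ _ _ hp
      have hMK' : ∀ x, |K x| ≤ MK := fun x => (Real.norm_eq_abs (K x)) ▸ hMK x
      have hMφ' : ∀ x, |φ x| ≤ Mφ := fun x => (Real.norm_eq_abs (φ x)) ▸ hMφ x
      simp only [hD, Set.indicator_of_mem hx]
      have heq : ‖Φ n p‖ = |K p.2.1| * |K p.2.2|
          * (|K (p.2.2 + g n / h n * p.2.1)| * |φ (p.1, p.1 - g n * p.2.1, p.1 + h n * p.2.2)|) := by
        simp only [hΦ, Real.norm_eq_abs, abs_mul]; ring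
      rw [heq]
      calc |K p.2.1| * |K p.2.2|
          * (|K (p.2.2 + g n / h n * p.2.1)| * |φ (p.1, p.1 - g n * p.2.1, p.1 + h n * p.2.2)|)
          ≤ |K p.2.1| * |K p.2.2| * (MK * Mφ) := by
            apply mul_le_mul_of_nonneg_left _ (mul_nonneg (abs_nonneg _) (abs_nonneg _))
            exact mul_le_mul (hMK' _) (hMφ' _) (abs_nonneg _) hMK0
        _ = MK * Mφ * (|K p.2.1| * |K p.2.2|) := by ring
  have hb2 : ∀ n (x : ℝ) (q : ℝ × ℝ), ‖Φ n (x, q)‖ ≤ MK * Mφ * (|K q.1| * |K q.2|) := by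
    intro n x q
    have hMK' : ∀ t, |K t| ≤ MK := fun t => (Real.norm_eq_abs (K t)) ▸ hMK t
    have hMφ' : ∀ t, |φ t| ≤ Mφ := fun t => (Real.norm_eq_abs (φ t)) ▸ hMφ t
    have heq : ‖Φ n (x, q)‖ = |K q.1| * |K q.2|
        * (|K (q.2 + g n / h n * q.1)| * |φ (x, x - g n * q.1, x + h n * q.2)|) := by
      simp only [hΦ, Real.norm_eq_abs, abs_mul]; ring
    rw [heq]
    calc |K q.1| * |K q.2| * (|K (q.2 + g n / h n * q.1)| * |φ (x, x - g n * q.1, x + h n * q.2)|)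
        ≤ |K q.1| * |K q.2| * (MK * Mφ) := by
          apply mul_le_mul_of_nonneg_left _ (mul_nonneg (abs_nonneg _) (abs_nonneg _))
          exact mul_le_mul (hMK' _) (hMφ' _) (abs_nonneg _) hMK0
      _ = MK * Mφ * (|K q.1| * |K q.2|) := by ring
  have hΦint : ∀ n, Integrable (Φ n) μ3 :=
    fun n => Integrable.mono' hDint (hΦcont n).aestronglyMeasurable (ae_of_all _ (hbound n))
  -- Fubini
  have fub : ∀ n, (∫ p, Φ n p ∂μ3)
      = ∫ x : ℝ, ∫ u : ℝ, ∫ w : ℝ, Φ n (x, (u, w)) := by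
    intro n
    rw [hμ3, integral_prod _ (hΦint n)]
    congr 1
    funext x
    have hcont : Continuous (fun q : ℝ × ℝ => Φ n (x, q)) :=
      (hΦcont n).comp (continuous_const.prodMk continuous_id)
    have hint : Integrable (fun q : ℝ × ℝ => Φ n (x, q)) ((volume : Measure ℝ).prod volume) :=
      Integrable.mono' (hKK.const_mul (MK * Mφ)) hcont.aestronglyMeasurable
        (ae_of_all _ (fun q => hb2 n x q))
    exact integral_prod _ hint
  -- g tends to 0
  have hg0 : Tendsto g atTop (nhds 0) := by
    have hmul := hgh.mul hh0
    rw [zero_mul] at hmul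
    exact hmul.congr fun n => div_mul_cancel₀ _ (hhpos n).ne'
  -- pointwise limit
  set Ψ : ℝ × ℝ × ℝ → ℝ := fun p => K p.2.1 * K p.2.2 * K p.2.2 * φ (p.1, p.1, p.1) with hΨ
  have hlim : ∀ p : ℝ × ℝ × ℝ, Tendsto (fun n => Φ n p) atTop (nhds (Ψ p)) := by
    intro p
    have t0 : Tendsto (fun n => g n / h n * p.2.1) atTop (nhds 0) := by
      simpa using hgh.mul_const p.2.1
    have tK : Tendsto (fun n => K (p.2.2 + g n / h n * p.2.1)) atTop (nhds (K p.2.2)) := by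
      have harg : Tendsto (fun n => p.2.2 + g n / h n * p.2.1) atTop (nhds p.2.2) := by
        simpa using (tendsto_const_nhds : Tendsto (fun _ : ℕ => p.2.2) atTop (nhds p.2.2)).add t0
      exact (hKc.tendsto _).comp harg
    have tφ : Tendsto (fun n => φ (p.1, p.1 - g n * p.2.1, p.1 + h n * p.2.2)) atTop
        (nhds (φ (p.1, p.1, p.1))) := by
      apply (hφ.tendsto _).comp
      have t1 : Tendsto (fun n => p.1 - g n * p.2.1) atTop (nhds p.1) := by
        simpa using (tendsto_const_nhds : Tendsto (fun _ : ℕ => p.1) atTop (nhds p.1)).sub (hg0.mul_const p.2.1)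
      have t2 : Tendsto (fun n => p.1 + h n * p.2.2) atTop (nhds p.1) := by
        simpa using (tendsto_const_nhds : Tendsto (fun _ : ℕ => p.1) atTop (nhds p.1)).add (hh0.mul_const p.2.2)
      exact (tendsto_const_nhds : Tendsto (fun _ : ℕ => p.1) atTop (nhds p.1)).prodMk_nhds (t1.prodMk_nhds t2)
    exact ((tendsto_const_nhds : Tendsto (fun _ : ℕ => K p.2.1 * K p.2.2) atTop (nhds (K p.2.1 * K p.2.2))).mul tK).mul tφ
  -- dominated convergence
  have main := tendsto_integral_of_dominated_convergence (μ := μ3) (F := Φ)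
    (f := Ψ) D (fun n => (hΦcont n).aestronglyMeasurable) hDint
    (fun n => ae_of_all _ (hbound n)) (ae_of_all _ hlim)
  -- compute the limit value
  have hval : (∫ p, Ψ p ∂μ3) = (∫ u : ℝ, (K u)^2) * ∫ x : ℝ, φ (x, x, x) := by
    calc (∫ p, Ψ p ∂μ3)
        = ∫ p : ℝ × ℝ × ℝ, (fun x => φ (x, x, x)) p.1
            * ((fun q : ℝ × ℝ => K q.1 * (K q.2)^2) p.2) ∂μ3 := by
          congr 1
          funext p
          simp only [hΨ]
          ring
      _ = (∫ x : ℝ, φ (x, x, x)) * ∫ q : ℝ × ℝ, K q.1 * (K q.2)^2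
            ∂((volume : Measure ℝ).prod volume) := by
          rw [hμ3]; exact integral_prod_mul (fun x : ℝ => φ (x, x, x)) (fun q : ℝ × ℝ => K q.1 * (K q.2)^2)
      _ = (∫ x : ℝ, φ (x, x, x)) * ((∫ u : ℝ, K u) * ∫ w : ℝ, (K w)^2) := by
          rw [integral_prod_mul (f := K) (g := fun w : ℝ => (K w)^2)]
      _ = (∫ u : ℝ, (K u)^2) * ∫ x : ℝ, φ (x, x, x) := by
          rw [hK1, one_mul, mul_comm]
  rw [hval] at main
  refine main.congr fun n => ?_
  rw [fub n]
  exact (key_eq K φ (g n) (h n) (hgpos n) (hhpos n)).symm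
end
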